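/- arXiv:1001.1285 — 10 statements merged into one kernel-verified Lean document; each statement's English description precedes it below -/
import Mathlib

section
/- Let A be an associative ℂ-algebra and let b⁺, b⁻ ∈ A. Define Ĥ = (i/2)((b⁺)² - (b⁻)²). Then [Ĥ, b⁺] = -i·b⁻ and [Ĥ, b⁻] = -i·b⁺ hold if and only if the osp(1|2) defining relations [{b⁻, b⁺}, b⁺] = 2b⁺ and [{b⁻, b⁺}, b⁻] = -2b⁻ hold. -/
lemma key_smul {A : Type*} [Ring A] [Algebra ℂ A] (x y : A) (c : ℂ) :
    (Complex.I / 2) • x = c • y ↔ x = (((Complex.I / 2)⁻¹) * c) • y := by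
  have hne : (Complex.I / 2 : ℂ) ≠ 0 := by
    simp [Complex.I_ne_zero]
  constructor
  · intro h
    have := congrArg (fun z => ((Complex.I / 2)⁻¹ : ℂ) • z) h
    simp only [smul_smul, inv_mul_cancel₀ hne, one_smul] at this
    exact this
  · intro h
    rw [h, smul_smul, ← mul_assoc, mul_inv_cancel₀ hne, one_mul]

/-- With Ĥ = (i/2)((b⁺)² - (b⁻)²), the relations
[Ĥ, b⁺] = -i·b⁻ and [Ĥ, b⁻] = -i·b⁺ hold iff the osp(1|2) defining relations
[{b⁻, b⁺}, b⁺] = 2b⁺ and [{b⁻, b⁺}, b⁻] = -2b⁻ hold. -/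
theorem commutator_H_iff_osp_relations
    {A : Type*} [Ring A] [Algebra ℂ A] (bp bm H : A)
    (hH : H = (Complex.I / 2) • (bp ^ 2 - bm ^ 2)) :
    (H * bp - bp * H = (-Complex.I) • bm ∧
     H * bm - bm * H = (-Complex.I) • bp) ↔
    ((bm * bp + bp * bm) * bp - bp * (bm * bp + bp * bm) = (2 : ℂ) • bp ∧
     (bm * bp + bp * bm) * bm - bm * (bm * bp + bp * bm) = (-2 : ℂ) • bm) := by
  subst hH
  have e1 : ((Complex.I / 2) • (bp ^ 2 - bm ^ 2)) * bp
      - bp * ((Complex.I / 2) • (bp ^ 2 - bm ^ 2))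
      = (Complex.I / 2) • (bp * bm ^ 2 - bm ^ 2 * bp) := by
    rw [smul_mul_assoc, mul_smul_comm, ← smul_sub]
    congr 1; noncomm_ring
  have e2 : ((Complex.I / 2) • (bp ^ 2 - bm ^ 2)) * bm
      - bm * ((Complex.I / 2) • (bp ^ 2 - bm ^ 2))
      = (Complex.I / 2) • (bp ^ 2 * bm - bm * bp ^ 2) := by
    rw [smul_mul_assoc, mul_smul_comm, ← smul_sub]
    congr 1; noncomm_ring
  rw [e1, e2, key_smul, key_smul]
  have hc : ((Complex.I / 2)⁻¹) * (-Complex.I) = (-2 : ℂ) := by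
    rw [inv_div]
    field_simp
  rw [hc]
  constructor
  · rintro ⟨h1, h2⟩
    constructor
    · have h3 : bm * bp ^ 2 - bp ^ 2 * bm = (2 : ℂ) • bp := by
        rw [← neg_sub, h2, neg_smul, neg_neg]
      calc (bm * bp + bp * bm) * bp - bp * (bm * bp + bp * bm)
          = bm * bp ^ 2 - bp ^ 2 * bm := by noncomm_ring
        _ = (2 : ℂ) • bp := h3
    · calc (bm * bp + bp * bm) * bm - bm * (bm * bp + bp * bm)
          = bp * bm ^ 2 - bm ^ 2 * bp := by noncomm_ring
        _ = (-2 : ℂ) • bm := h1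
  · rintro ⟨h1, h2⟩
    constructor
    · calc bp * bm ^ 2 - bm ^ 2 * bp
          = (bm * bp + bp * bm) * bm - bm * (bm * bp + bp * bm) := by noncomm_ring
        _ = (-2 : ℂ) • bm := h2
    · have h3 : bm * bp ^ 2 - bp ^ 2 * bm = (2 : ℂ) • bp := by
        calc bm * bp ^ 2 - bp ^ 2 * bm
            = (bm * bp + bp * bm) * bp - bp * (bm * bp + bp * bm) := by noncomm_ring
          _ = (2 : ℂ) • bp := h1
      rw [← neg_sub, h3, ← neg_smul]
end

section
/- Let A be an associative ℂ-algebra and let b⁺, b⁻ ∈ A satisfy the osp(1|2) defining relations [{b⁻, b⁺}, b⁺] = 2b⁺ and [{b⁻, b⁺}, b⁻] = -2b⁻. Define h = (1/2){b⁻, b⁺}, e = (1/4){b⁺, b⁺}, f = -(1/4){b⁻, b⁻}, and Ω = -(1/4)(4fe + h² + 2h). Then (b⁻b⁺ - b⁺b⁻)² = 4(b⁻b⁺ - b⁺b⁻) - 16Ω. -/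
/-- If b⁺, b⁻ satisfy the osp(1|2) defining relations and
Ω = -(1/4)(4fe + h² + 2h), then (b⁻b⁺ - b⁺b⁻)² = 4(b⁻b⁺ - b⁺b⁻) - 16Ω. -/
theorem square_of_bracket_identity
    {A : Type*} [Ring A] [Algebra ℂ A] (bp bm : A)
    (rel1 : (bm * bp + bp * bm) * bp - bp * (bm * bp + bp * bm) = (2 : ℂ) • bp)
    (rel2 : (bm * bp + bp * bm) * bm - bm * (bm * bp + bp * bm) = (-2 : ℂ) • bm)
    (h e f Ω : A)
    (hh : h = (1 / 2 : ℂ) • (bm * bp + bp * bm))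
    (he : e = (1 / 4 : ℂ) • (bp * bp + bp * bp))
    (hf : f = -((1 / 4 : ℂ) • (bm * bm + bm * bm)))
    (hΩ : Ω = -((1 / 4 : ℂ) • ((4 : ℂ) • (f * e) + h ^ 2 + (2 : ℂ) • h))) :
    (bm * bp - bp * bm) ^ 2 = (4 : ℂ) • (bm * bp - bp * bm) - (16 : ℂ) • Ω := by
  have hXP : (bm*bp+bp*bm) * bp = bp * (bm*bp+bp*bm) + (2:ℂ) • bp := by
    rw [← rel1]; abel
  have hXM : (bm*bp+bp*bm) * bm = bm * (bm*bp+bp*bm) + (-2:ℂ) • bm := by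
    rw [← rel2]; abel
  have c1 : (bm*bp+bp*bm) * (bm*bp) = (bm*bp) * (bm*bp+bp*bm) := by
    calc (bm*bp+bp*bm)*(bm*bp) = ((bm*bp+bp*bm)*bm)*bp := by rw [mul_assoc]
    _ = (bm*(bm*bp+bp*bm) + (-2:ℂ)•bm)*bp := by rw [hXM]
    _ = bm*((bm*bp+bp*bm)*bp) + (-2:ℂ)•(bm*bp) := by
        simp only [add_mul, smul_mul_assoc, mul_assoc]
    _ = bm*(bp*(bm*bp+bp*bm) + (2:ℂ)•bp) + (-2:ℂ)•(bm*bp) := by rw [hXP]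
    _ = (bm*bp)*(bm*bp+bp*bm) := by
        simp only [mul_add, mul_smul_comm, ← mul_assoc]; module
  have c1' : (bp*bm)*(bm*bp) = (bm*bp)*(bp*bm) := by
    have h2 := c1
    rw [add_mul, mul_add] at h2
    exact add_left_cancel h2
  have c2 : bm*(bp*bp) = (2:ℂ)•bp + bp*(bp*bm) := by
    calc bm*(bp*bp) = ((bm*bp+bp*bm))*bp - bp*(bm*bp) := by noncomm_ring
    _ = (bp*(bm*bp+bp*bm) + (2:ℂ)•bp) - bp*(bm*bp) := by rw [hXP]
    _ = (2:ℂ)•bp + bp*(bp*bm) := by simp only [mul_add]; module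
  have c2' : bm*(bp*(bp*bm)) = bm*(bm*(bp*bp)) - (2:ℂ)•(bm*bp) := by
    rw [c2]
    simp only [mul_add, mul_smul_comm]; module
  have key : (bm*bp)*(bp*bm) = bm*(bm*(bp*bp)) - (2:ℂ)•(bm*bp) := by
    rw [mul_assoc]; exact c2'
  have L : (bm*bp - bp*bm)^2 =
      (8:ℂ)•(bm*bp) - (4:ℂ)•(bm*(bm*(bp*bp))) + (bm*bp+bp*bm)*(bm*bp+bp*bm) := by
    have expand : (bm*bp - bp*bm)^2 =
        (bm*bp+bp*bm)*(bm*bp+bp*bm) - (2:ℂ)•((bm*bp)*(bp*bm)) - (2:ℂ)•((bp*bm)*(bm*bp)) := by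
      simp only [pow_two, sub_mul, mul_sub, add_mul, mul_add]; module
    rw [expand, c1', key]; module
  rw [hΩ, hh, he, hf, L]
  simp only [pow_two, mul_add, add_mul, mul_sub, sub_mul, smul_mul_assoc, mul_smul_comm,
    smul_smul, smul_add, smul_sub, smul_neg, neg_smul, neg_mul, mul_neg, neg_neg, mul_assoc]
  module
end

section
/- Let A be an associative ℂ-algebra and let b⁺, b⁻ ∈ A satisfy the osp(1|2) defining relations [{b⁻, b⁺}, b⁺] = 2b⁺ and [{b⁻, b⁺}, b⁻] = -2b⁻. Define h = (1/2){b⁻, b⁺}, e = (1/4){b⁺, b⁺}, f = -(1/4){b⁻, b⁻}, Ω = -(1/4)(4fe + h² + 2h), and C = -4Ω + (1/2)(b⁻b⁺ - b⁺b⁻). Then C² = (1 - 4Ω)(2C + 4Ω). -/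
set_option maxHeartbeats 4000000


/-- If b⁺, b⁻ satisfy the osp(1|2) defining relations, with
Ω = -(1/4)(4fe + h² + 2h) and C = -4Ω + (1/2)(b⁻b⁺ - b⁺b⁻), then
C² = (1 - 4Ω)(2C + 4Ω). -/
theorem casimir_square_identity
    {A : Type*} [Ring A] [Algebra ℂ A] (bp bm : A)
    (rel1 : (bm * bp + bp * bm) * bp - bp * (bm * bp + bp * bm) = (2 : ℂ) • bp)
    (rel2 : (bm * bp + bp * bm) * bm - bm * (bm * bp + bp * bm) = (-2 : ℂ) • bm)
    (h e f Ω C : A)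
    (hh : h = (1 / 2 : ℂ) • (bm * bp + bp * bm))
    (he : e = (1 / 4 : ℂ) • (bp * bp + bp * bp))
    (hf : f = -((1 / 4 : ℂ) • (bm * bm + bm * bm)))
    (hΩ : Ω = -((1 / 4 : ℂ) • ((4 : ℂ) • (f * e) + h ^ 2 + (2 : ℂ) • h)))
    (hC : C = -((4 : ℂ) • Ω) + (1 / 2 : ℂ) • (bm * bp - bp * bm)) :
    C ^ 2 = (1 - (4 : ℂ) • Ω) * ((2 : ℂ) • C + (4 : ℂ) • Ω) := by
  -- Derived relation 1: bm bp² = bp² bm + 2 bp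
  have A1 : bm * (bp * bp) = bp * (bp * bm) + (2 : ℂ) • bp := by
    have h1 : bm * (bp * bp) - bp * (bp * bm) = (2 : ℂ) • bp := by
      rw [← rel1]; noncomm_ring
    exact sub_eq_iff_eq_add'.mp h1
  -- Derived relation 2: bm² bp = bp bm² + 2 bm
  have A2 : bm * (bm * bp) = bp * (bm * bm) + (2 : ℂ) • bm := by
    have h2 : bm * (bm * bp) - bp * (bm * bm) = (2 : ℂ) • bm := by
      have h2' : -(bm * (bm * bp) - bp * (bm * bm)) = (-2 : ℂ) • bm := by
        rw [← rel2]; noncomm_ring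
      have h2'' := congrArg Neg.neg h2'
      simpa using h2''
    exact sub_eq_iff_eq_add'.mp h2
  -- Variants with a trailing factor
  have A1' : ∀ t : A, bm * (bp * (bp * t)) = bp * (bp * (bm * t)) + (2 : ℂ) • (bp * t) := by
    intro t
    have : bm * (bp * (bp * t)) = (bm * (bp * bp)) * t := by noncomm_ring
    rw [this, A1, add_mul, smul_mul_assoc, mul_assoc, mul_assoc]
  have A2' : ∀ t : A, bm * (bm * (bp * t)) = bp * (bm * (bm * t)) + (2 : ℂ) • (bm * t) := by
    intro t
    have : bm * (bm * (bp * t)) = (bm * (bm * bp)) * t := by noncomm_ring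
    rw [this, A2, add_mul, smul_mul_assoc, mul_assoc, mul_assoc]
  subst hh he hf hΩ hC
  simp only [pow_two, mul_add, add_mul, mul_sub, sub_mul, mul_neg, neg_mul, neg_add,
    neg_neg, neg_sub, smul_add, smul_sub, smul_neg, neg_smul, mul_smul_comm,
    smul_mul_assoc, smul_smul, mul_assoc, one_mul, mul_one, A1', A2', A1, A2]
  module
end

section
/- Let A be an associative ℂ-algebra and let b⁺, b⁻ ∈ A satisfy the osp(1|2) defining relations [{b⁻, b⁺}, b⁺] = 2b⁺ and [{b⁻, b⁺}, b⁻] = -2b⁻. Define h = (1/2){b⁻, b⁺}, e = (1/4){b⁺, b⁺}, f = -(1/4){b⁻, b⁻}, Ω = -(1/4)(4fe + h² + 2h), and C = -4Ω + (1/2)(b⁻b⁺ - b⁺b⁻). Then 4Ωb⁺ = b⁺(1 - 2C - 4Ω) and 4Ωb⁻ = b⁻(1 - 2C - 4Ω). -/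
/-- If b⁺, b⁻ satisfy the osp(1|2) defining relations, with
Ω = -(1/4)(4fe + h² + 2h) and C = -4Ω + (1/2)(b⁻b⁺ - b⁺b⁻), then
4Ωb⁺ = b⁺(1 - 2C - 4Ω) and 4Ωb⁻ = b⁻(1 - 2C - 4Ω). -/
theorem four_omega_b_identity
    {A : Type*} [Ring A] [Algebra ℂ A] (bp bm : A)
    (rel1 : (bm * bp + bp * bm) * bp - bp * (bm * bp + bp * bm) = (2 : ℂ) • bp)
    (rel2 : (bm * bp + bp * bm) * bm - bm * (bm * bp + bp * bm) = (-2 : ℂ) • bm)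
    (h e f Ω C : A)
    (hh : h = (1 / 2 : ℂ) • (bm * bp + bp * bm))
    (he : e = (1 / 4 : ℂ) • (bp * bp + bp * bp))
    (hf : f = -((1 / 4 : ℂ) • (bm * bm + bm * bm)))
    (hΩ : Ω = -((1 / 4 : ℂ) • ((4 : ℂ) • (f * e) + h ^ 2 + (2 : ℂ) • h)))
    (hC : C = -((4 : ℂ) • Ω) + (1 / 2 : ℂ) • (bm * bp - bp * bm)) :
    ((4 : ℂ) • Ω) * bp = bp * (1 - (2 : ℂ) • C - (4 : ℂ) • Ω) ∧
    ((4 : ℂ) • Ω) * bm = bm * (1 - (2 : ℂ) • C - (4 : ℂ) • Ω) := by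
  have rp := rel1; rw [two_smul] at rp
  have rm := rel2; rw [neg_smul, two_smul] at rm
  have cast4 : ∀ x : A, (4:ℂ) • x = (4:ℕ) • x := fun x => by
    rw [← Nat.cast_smul_eq_nsmul ℂ]; norm_num
  have hY : (16:ℂ) • Ω = (4:ℂ) • (bm*bm*(bp*bp))
      - (bm*bp+bp*bm)*(bm*bp+bp*bm) - (4:ℂ) • (bm*bp+bp*bm) := by
    rw [hΩ, hh, he, hf]
    simp only [pow_two, smul_add, smul_sub, smul_neg, neg_smul, mul_smul_comm,
      smul_mul_assoc, smul_smul, mul_add, add_mul, neg_mul, mul_neg, sub_eq_add_neg]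
    module
  have hR : (4:ℂ) • (1 - (2:ℂ) • C - (4:ℂ) • Ω)
      = (4:ℂ) • (1:A) + (16:ℂ) • Ω - (4:ℂ) • (bm*bp) + (4:ℂ) • (bp*bm) := by
    rw [hC]; module
  constructor
  · have key : ((16:ℂ) • Ω) * bp = bp * ((4:ℂ) • (1 - (2:ℂ) • C - (4:ℂ) • Ω)) := by
      rw [hR, hY]
      simp only [cast4]
      linear_combination (norm := noncomm_ring)
        2*rp - (bm*bp+bp*bm)*rp - rp*(bm*bp+bp*bm) - 4*(rm*(bp*bp))
    have h4 : (4:ℂ) • (((4:ℂ) • Ω) * bp)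
        = (4:ℂ) • (bp * (1 - (2:ℂ) • C - (4:ℂ) • Ω)) := by
      rw [← smul_mul_assoc, smul_smul, ← mul_smul_comm]
      norm_num
      rw [smul_mul_assoc, mul_smul_comm] at key; exact key
    exact smul_right_injective A (show (4:ℂ) ≠ 0 by norm_num) h4
  · have key : ((16:ℂ) • Ω) * bm = bm * ((4:ℂ) • (1 - (2:ℂ) • C - (4:ℂ) • Ω)) := by
      rw [hR, hY]
      simp only [cast4]
      linear_combination (norm := noncomm_ring)
        (-4)*((bm*bm)*rp) - (bm*bp+bp*bm)*rm - rm*(bm*bp+bp*bm) - 2*rm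
    have h4 : (4:ℂ) • (((4:ℂ) • Ω) * bm)
        = (4:ℂ) • (bm * (1 - (2:ℂ) • C - (4:ℂ) • Ω)) := by
      rw [← smul_mul_assoc, smul_smul, ← mul_smul_comm]
      norm_num
      rw [smul_mul_assoc, mul_smul_comm] at key; exact key
    exact smul_right_injective A (show (4:ℂ) ≠ 0 by norm_num) h4
end

section
/- Let μ, δ be real numbers. There exists no function a : ℤ → ℝ satisfying a_0 = 1, a_{2k+1} = 2(μ + k - δ)·a_{2k} and a_{2k} = (1/2)(μ + k + δ)·a_{2k-1} for all integers k, together with a_k > 0 for all k ∈ ℤ. (Consequently, every irreducible ∗-representation of osp(1|2) must be a lowest weight representation.) -/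
/-- there is no doubly infinite positive sequence a : ℤ → ℝ with
a₀ = 1 satisfying a_{2k+1} = 2(μ+k-δ)a_{2k} and a_{2k} = (1/2)(μ+k+δ)a_{2k-1}
for all integers k.  (Hence every irreducible ∗-representation of osp(1|2)
must be a lowest weight representation.) -/
theorem no_doubly_infinite_positive_sequence
    (μ δ : ℝ) :
    ¬ ∃ a : ℤ → ℝ,
        a 0 = 1 ∧
        (∀ k : ℤ, a (2 * k + 1) = 2 * (μ + k - δ) * a (2 * k)) ∧
        (∀ k : ℤ, a (2 * k) = (1 / 2) * (μ + k + δ) * a (2 * k - 1)) ∧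
        (∀ k : ℤ, 0 < a k) := by
  rintro ⟨a, -, hodd, -, hpos⟩
  set k : ℤ := ⌊δ - μ⌋ with hk
  have h1 : (k : ℝ) ≤ δ - μ := Int.floor_le _
  have h2 := hpos (2 * k + 1)
  have h3 := hpos (2 * k)
  rw [hodd k] at h2
  nlinarith
end

section
/- Let μ > 0 be a real number, let V be the complex vector space of finitely supported functions ℕ → ℂ with standard basis (e_k)_{k ∈ ℕ}, and define linear operators b⁺, b⁻ on V by b⁺e_{2k} = √(2(2μ+k))·e_{2k+1}, b⁻e_{2k} = √(2k)·e_{2k-1} (so b⁻e_0 = 0), b⁺e_{2k+1} = √(2(k+1))·e_{2k+2}, and b⁻e_{2k+1} = √(2(2μ+k))·e_{2k}, for all k ∈ ℕ. Then b⁺ and b⁻ satisfy the osp(1|2) defining relations [{b⁻, b⁺}, b⁺] = 2b⁺ and [{b⁻, b⁺}, b⁻] = -2b⁻ as linear operators on V. -/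
/-- for μ > 0, the operators b⁺, b⁻ on the space of finitely
supported functions ℕ → ℂ defined on the standard basis by
b⁺e_{2k} = √(2(2μ+k))·e_{2k+1}, b⁻e_{2k} = √(2k)·e_{2k-1} (b⁻e₀ = 0),
b⁺e_{2k+1} = √(2(k+1))·e_{2k+2}, b⁻e_{2k+1} = √(2(2μ+k))·e_{2k}
satisfy the osp(1|2) defining relations. -/
theorem representation_satisfies_osp_relations
    (μ : ℝ) (hμ : 0 < μ)
    (bp bm : Module.End ℂ (ℕ →₀ ℂ))
    (hbp_even : ∀ k : ℕ, bp (Finsupp.single (2 * k) 1) =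
      ((Real.sqrt (2 * (2 * μ + k)) : ℝ) : ℂ) • Finsupp.single (2 * k + 1) 1)
    (hbm_zero : bm (Finsupp.single 0 1) = 0)
    (hbm_even : ∀ k : ℕ, bm (Finsupp.single (2 * (k + 1)) 1) =
      ((Real.sqrt (2 * (k + 1)) : ℝ) : ℂ) • Finsupp.single (2 * k + 1) 1)
    (hbp_odd : ∀ k : ℕ, bp (Finsupp.single (2 * k + 1) 1) =
      ((Real.sqrt (2 * (k + 1)) : ℝ) : ℂ) • Finsupp.single (2 * k + 2) 1)
    (hbm_odd : ∀ k : ℕ, bm (Finsupp.single (2 * k + 1) 1) =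
      ((Real.sqrt (2 * (2 * μ + k)) : ℝ) : ℂ) • Finsupp.single (2 * k) 1) :
    (bm * bp + bp * bm) * bp - bp * (bm * bp + bp * bm) = (2 : ℂ) • bp ∧
    (bm * bp + bp * bm) * bm - bm * (bm * bp + bp * bm) = (-2 : ℂ) • bm := by
  have hs1 : ∀ k : ℕ, ((Real.sqrt (2 * (2 * μ + k)) : ℂ)) * (Real.sqrt (2 * (2 * μ + k)) : ℂ)
      = ((2 * (2 * μ + k) : ℝ) : ℂ) := by
    intro k
    rw [← Complex.ofReal_mul, Real.mul_self_sqrt (by positivity)]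
  have hs2 : ∀ k : ℕ, ((Real.sqrt (2 * ((k : ℝ) + 1)) : ℂ)) * (Real.sqrt (2 * ((k : ℝ) + 1)) : ℂ)
      = ((2 * ((k : ℝ) + 1) : ℝ) : ℂ) := by
    intro k
    rw [← Complex.ofReal_mul, Real.mul_self_sqrt (by positivity)]
  have Heven : ∀ k : ℕ, (bm * bp + bp * bm) (Finsupp.single (2 * k) 1) =
      ((2 * (2 * μ + k) + 2 * k : ℝ) : ℂ) • Finsupp.single (2 * k) 1 := by
    intro k
    rw [LinearMap.add_apply, Module.End.mul_apply, Module.End.mul_apply, hbp_even k, map_smul,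
      hbm_odd k]
    cases k with
    | zero =>
      rw [show (2 * 0 : ℕ) = 0 from rfl, hbm_zero]
      simp only [map_zero, add_zero, smul_smul, hs1 0]
      push_cast
      ring_nf
    | succ n =>
      rw [hbm_even n, map_smul, hbp_odd n]
      simp only [smul_smul, hs1 (n + 1), hs2 n, show (2 * (n + 1) : ℕ) = 2 * n + 2 by ring]
      rw [← add_smul]
      congr 1
      push_cast
      ring
  have Hodd : ∀ k : ℕ, (bm * bp + bp * bm) (Finsupp.single (2 * k + 1) 1) =
      ((2 * (k + 1) + 2 * (2 * μ + k) : ℝ) : ℂ) • Finsupp.single (2 * k + 1) 1 := by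
    intro k
    rw [LinearMap.add_apply, Module.End.mul_apply, Module.End.mul_apply, hbp_odd k, map_smul,
      hbm_odd k, map_smul, hbp_even k,
      show (2 * k + 2 : ℕ) = 2 * (k + 1) from rfl, hbm_even k]
    simp only [smul_smul, hs1 k, hs2 k]
    rw [← add_smul]
    congr 1
    push_cast
    ring
  constructor
  · apply Finsupp.lhom_ext
    intro n c
    have hc : (Finsupp.single n c : ℕ →₀ ℂ) = c • Finsupp.single n 1 := by
      rw [Finsupp.smul_single, smul_eq_mul, mul_one]
    rw [hc, map_smul, map_smul]
    congr 1
    rw [LinearMap.sub_apply, Module.End.mul_apply, Module.End.mul_apply, LinearMap.smul_apply]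
    rcases Nat.even_or_odd n with ⟨k, hk⟩ | ⟨k, hk⟩
    · subst hk
      rw [show k + k = 2 * k from (two_mul k).symm, hbp_even k, map_smul, Hodd k, Heven k,
        map_smul, hbp_even k]
      simp only [smul_smul]
      rw [← sub_smul]
      congr 1
      push_cast
      ring
    · subst hk
      rw [hbp_odd k, map_smul, show (2 * k + 2 : ℕ) = 2 * (k + 1) from rfl, Heven (k + 1),
        Hodd k, map_smul, hbp_odd k]
      simp only [smul_smul, show (2 * (k + 1) : ℕ) = 2 * k + 2 by ring]
      rw [← sub_smul]
      congr 1
      push_cast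
      ring
  · apply Finsupp.lhom_ext
    intro n c
    have hc : (Finsupp.single n c : ℕ →₀ ℂ) = c • Finsupp.single n 1 := by
      rw [Finsupp.smul_single, smul_eq_mul, mul_one]
    rw [hc, map_smul, map_smul]
    congr 1
    rw [LinearMap.sub_apply, Module.End.mul_apply, Module.End.mul_apply, LinearMap.smul_apply]
    rcases Nat.even_or_odd n with ⟨k, hk⟩ | ⟨k, hk⟩
    · subst hk
      rw [show k + k = 2 * k from (two_mul k).symm]
      cases k with
      | zero =>
        rw [show (2 * 0 : ℕ) = 0 from rfl, hbm_zero, map_zero, Heven 0, map_smul,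
          show (2 * 0 : ℕ) = 0 from rfl, hbm_zero]
        simp
      | succ m =>
        rw [hbm_even m, map_smul, Hodd m, Heven (m + 1), map_smul, hbm_even m]
        simp only [smul_smul]
        rw [← sub_smul]
        congr 1
        push_cast
        ring
    · subst hk
      rw [hbm_odd k, map_smul, Heven k, Hodd k, map_smul, hbm_odd k]
      simp only [smul_smul]
      rw [← sub_smul]
      congr 1
      push_cast
      ring
end

section
/- Let μ > 0 be a real number, let V be the complex vector space of finitely supported functions ℕ → ℂ with standard basis (e_k)_{k ∈ ℕ}, and define linear operators b⁺, b⁻ on V by b⁺e_{2k} = √(2(2μ+k))·e_{2k+1}, b⁻e_{2k} = √(2k)·e_{2k-1} (so b⁻e_0 = 0), b⁺e_{2k+1} = √(2(k+1))·e_{2k+2}, and b⁻e_{2k+1} = √(2(2μ+k))·e_{2k}, for all k ∈ ℕ. Define h = (1/2){b⁻, b⁺}, e = (1/4){b⁺, b⁺}, f = -(1/4){b⁻, b⁻}, Ω = -(1/4)(4fe + h² + 2h), and C = -4Ω + (1/2)(b⁻b⁺ - b⁺b⁻). Then C·e_k = 2μ(2μ-1)·e_k for every k ∈ ℕ. -/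
lemma aux_casimir (bp bm : Module.End ℂ (ℕ →₀ ℂ)) (w w1 w2 : ℕ →₀ ℂ) (a b T : ℂ)
    (h1 : bp w = a • w1) (h2 : bm w1 = a • w) (h3 : bp w1 = b • w2) (h4 : bm w2 = b • w1)
    (h5 : bp (bm w) = T • w) :
    (-((4:ℂ) • (-((1/4:ℂ) • ((4:ℂ) • ((-((1/4:ℂ) • (bm*bm + bm*bm))) * ((1/4:ℂ) • (bp*bp+bp*bp)))
      + ((1/2:ℂ)•(bm*bp+bp*bm))^2 + (2:ℂ) • ((1/2:ℂ)•(bm*bp+bp*bm)))))) + (1/2:ℂ)•(bm*bp - bp*bm)) w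
    = (-(a*a)*(b*b) + ((a*a+T)/2)^2 + (a*a+T) + (a*a-T)/2) • w := by
  simp only [Module.End.mul_apply, pow_two, LinearMap.add_apply, LinearMap.sub_apply,
    LinearMap.smul_apply, LinearMap.neg_apply, map_smul, map_add, map_neg, map_sub,
    h1, h2, h3, h4, h5, smul_smul, smul_add, smul_neg, smul_sub]
  module

/-- for μ > 0 and the osp(1|2) representation operators b⁺, b⁻
on finitely supported functions ℕ → ℂ, the osp(1|2) Casimir
C = -4Ω + (1/2)(b⁻b⁺ - b⁺b⁻) acts as the constant 2μ(2μ-1) on every basis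
vector e_k. -/
theorem osp_casimir_action_on_basis
    (μ : ℝ) (hμ : 0 < μ)
    (bp bm : Module.End ℂ (ℕ →₀ ℂ))
    (hbp_even : ∀ k : ℕ, bp (Finsupp.single (2 * k) 1) =
      ((Real.sqrt (2 * (2 * μ + k)) : ℝ) : ℂ) • Finsupp.single (2 * k + 1) 1)
    (hbm_zero : bm (Finsupp.single 0 1) = 0)
    (hbm_even : ∀ k : ℕ, bm (Finsupp.single (2 * (k + 1)) 1) =
      ((Real.sqrt (2 * (k + 1)) : ℝ) : ℂ) • Finsupp.single (2 * k + 1) 1)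
    (hbp_odd : ∀ k : ℕ, bp (Finsupp.single (2 * k + 1) 1) =
      ((Real.sqrt (2 * (k + 1)) : ℝ) : ℂ) • Finsupp.single (2 * k + 2) 1)
    (hbm_odd : ∀ k : ℕ, bm (Finsupp.single (2 * k + 1) 1) =
      ((Real.sqrt (2 * (2 * μ + k)) : ℝ) : ℂ) • Finsupp.single (2 * k) 1)
    (h e f Ω C : Module.End ℂ (ℕ →₀ ℂ))
    (hh : h = (1 / 2 : ℂ) • (bm * bp + bp * bm))
    (he : e = (1 / 4 : ℂ) • (bp * bp + bp * bp))
    (hf : f = -((1 / 4 : ℂ) • (bm * bm + bm * bm)))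
    (hΩ : Ω = -((1 / 4 : ℂ) • ((4 : ℂ) • (f * e) + h ^ 2 + (2 : ℂ) • h)))
    (hC : C = -((4 : ℂ) • Ω) + (1 / 2 : ℂ) • (bm * bp - bp * bm)) :
    ∀ k : ℕ, C (Finsupp.single k 1) =
      ((2 * μ * (2 * μ - 1) : ℝ) : ℂ) • Finsupp.single k 1 := by
  subst hh he hf hΩ hC
  intro k
  rcases Nat.even_or_odd k with ⟨j, rfl⟩ | ⟨j, rfl⟩
  · -- even case k = j + j
    rw [show j + j = 2 * j from (two_mul j).symm]
    have hw1 := hbp_even j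
    have hw2 := hbm_odd j
    have hw3 := hbp_odd j
    have hw4 : bm (Finsupp.single (2*j+2) 1) =
        ((Real.sqrt (2 * (j + 1)) : ℝ) : ℂ) • Finsupp.single (2*j+1) 1 := by
      have := hbm_even j; rwa [show 2*(j+1) = 2*j+2 by ring] at this
    have hw5 : bp (bm (Finsupp.single (2*j) 1)) =
        ((2*(j:ℝ) : ℝ) : ℂ) • Finsupp.single (2*j) 1 := by
      rcases j with _ | i
      · simp [hbm_zero]
      · have h1 : bm (Finsupp.single (2*(i+1)) 1) =
            ((Real.sqrt (2 * (i + 1)) : ℝ) : ℂ) • Finsupp.single (2*i+1) 1 := hbm_even i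
        rw [h1, map_smul, hbp_odd i, smul_smul, ← Complex.ofReal_mul,
          Real.mul_self_sqrt (by positivity), show 2*i+2 = 2*(i+1) by ring]
        push_cast
        ring_nf
    rw [aux_casimir bp bm _ _ _ _ _ _ hw1 hw2 hw3 hw4 hw5]
    congr 1
    rw [show ((Real.sqrt (2 * (2 * μ + j)) : ℝ) : ℂ) * ((Real.sqrt (2 * (2 * μ + j)) : ℝ) : ℂ)
        = ((2 * (2 * μ + j) : ℝ) : ℂ) by
      rw [← Complex.ofReal_mul, Real.mul_self_sqrt (by positivity)]]
    rw [show ((Real.sqrt (2 * (j+1)) : ℝ) : ℂ) * ((Real.sqrt (2 * (j+1)) : ℝ) : ℂ)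
        = ((2 * ((j:ℝ)+1) : ℝ) : ℂ) by
      rw [← Complex.ofReal_mul, Real.mul_self_sqrt (by positivity)]]
    push_cast
    ring
  · -- odd case k = 2*j + 1
    have hw1 := hbp_odd j
    have hw2 : bm (Finsupp.single (2*j+2) 1) =
        ((Real.sqrt (2 * (j + 1)) : ℝ) : ℂ) • Finsupp.single (2*j+1) 1 := by
      have := hbm_even j; rwa [show 2*(j+1) = 2*j+2 by ring] at this
    have hw3 : bp (Finsupp.single (2*j+2) 1) =
        ((Real.sqrt (2 * (2 * μ + (j+1:ℕ))) : ℝ) : ℂ) • Finsupp.single (2*j+3) 1 := by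
      have := hbp_even (j+1)
      rwa [show 2*(j+1) = 2*j+2 by ring, show 2*j+2+1 = 2*j+3 by ring] at this
    have hw4 : bm (Finsupp.single (2*j+3) 1) =
        ((Real.sqrt (2 * (2 * μ + (j+1:ℕ))) : ℝ) : ℂ) • Finsupp.single (2*j+2) 1 := by
      have := hbm_odd (j+1)
      rwa [show 2*(j+1)+1 = 2*j+3 by ring, show 2*(j+1) = 2*j+2 by ring] at this
    have hw5 : bp (bm (Finsupp.single (2*j+1) 1)) =
        ((2 * (2 * μ + j) : ℝ) : ℂ) • Finsupp.single (2*j+1) 1 := by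
      rw [hbm_odd j, map_smul, hbp_even j, smul_smul, ← Complex.ofReal_mul,
        Real.mul_self_sqrt (by positivity)]
    rw [aux_casimir bp bm _ _ _ _ _ _ hw1 hw2 hw3 hw4 hw5]
    congr 1
    rw [show ((Real.sqrt (2 * (j+1)) : ℝ) : ℂ) * ((Real.sqrt (2 * (j+1)) : ℝ) : ℂ)
        = ((2 * ((j:ℝ)+1) : ℝ) : ℂ) by
      rw [← Complex.ofReal_mul, Real.mul_self_sqrt (by positivity)]]
    rw [show ((Real.sqrt (2 * (2 * μ + (j+1:ℕ))) : ℝ) : ℂ) * ((Real.sqrt (2 * (2 * μ + (j+1:ℕ))) : ℝ) : ℂ)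
        = ((2 * (2 * μ + (j:ℝ) + 1) : ℝ) : ℂ) by
      rw [← Complex.ofReal_mul, Real.mul_self_sqrt (by positivity)]; push_cast; ring]
    push_cast
    ring
end

section
/- Let μ > 0 be a real number, let V be the complex vector space of finitely supported functions ℕ → ℂ with standard basis (e_k)_{k ∈ ℕ}, and define linear operators b⁺, b⁻ on V by b⁺e_{2k} = √(2(2μ+k))·e_{2k+1}, b⁻e_{2k} = √(2k)·e_{2k-1} (so b⁻e_0 = 0), b⁺e_{2k+1} = √(2(k+1))·e_{2k+2}, and b⁻e_{2k+1} = √(2(2μ+k))·e_{2k}, for all k ∈ ℕ. Define h = (1/2){b⁻, b⁺}, e = (1/4){b⁺, b⁺}, f = -(1/4){b⁻, b⁻}, and Ω = -(1/4)(4fe + h² + 2h). Then Ω·e_{2k} = μ(1-μ)·e_{2k} and Ω·e_{2k+1} = (1/4 - μ²)·e_{2k+1} for every k ∈ ℕ; in particular, the su(1,1) Casimir Ω acts as a constant on the even-indexed basis vectors and as a (generally different) constant on the odd-indexed basis vectors. -/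
/-- for μ > 0 and the osp(1|2) representation operators b⁺, b⁻
on finitely supported functions ℕ → ℂ, the su(1,1) Casimir
Ω = -(1/4)(4fe + h² + 2h) acts as μ(1-μ) on the even-indexed basis vectors
and as 1/4 - μ² on the odd-indexed basis vectors. -/
theorem su11_casimir_action_on_basis
    (μ : ℝ) (hμ : 0 < μ)
    (bp bm : Module.End ℂ (ℕ →₀ ℂ))
    (hbp_even : ∀ k : ℕ, bp (Finsupp.single (2 * k) 1) =
      ((Real.sqrt (2 * (2 * μ + k)) : ℝ) : ℂ) • Finsupp.single (2 * k + 1) 1)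
    (hbm_zero : bm (Finsupp.single 0 1) = 0)
    (hbm_even : ∀ k : ℕ, bm (Finsupp.single (2 * (k + 1)) 1) =
      ((Real.sqrt (2 * (k + 1)) : ℝ) : ℂ) • Finsupp.single (2 * k + 1) 1)
    (hbp_odd : ∀ k : ℕ, bp (Finsupp.single (2 * k + 1) 1) =
      ((Real.sqrt (2 * (k + 1)) : ℝ) : ℂ) • Finsupp.single (2 * k + 2) 1)
    (hbm_odd : ∀ k : ℕ, bm (Finsupp.single (2 * k + 1) 1) =
      ((Real.sqrt (2 * (2 * μ + k)) : ℝ) : ℂ) • Finsupp.single (2 * k) 1)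
    (h e f Ω : Module.End ℂ (ℕ →₀ ℂ))
    (hh : h = (1 / 2 : ℂ) • (bm * bp + bp * bm))
    (he : e = (1 / 4 : ℂ) • (bp * bp + bp * bp))
    (hf : f = -((1 / 4 : ℂ) • (bm * bm + bm * bm)))
    (hΩ : Ω = -((1 / 4 : ℂ) • ((4 : ℂ) • (f * e) + h ^ 2 + (2 : ℂ) • h))) :
    ∀ k : ℕ,
      Ω (Finsupp.single (2 * k) 1) =
        ((μ * (1 - μ) : ℝ) : ℂ) • Finsupp.single (2 * k) 1 ∧
      Ω (Finsupp.single (2 * k + 1) 1) =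
        ((1 / 4 - μ ^ 2 : ℝ) : ℂ) • Finsupp.single (2 * k + 1) 1 := by
  intro k
  set A : ℝ := 2 * (2 * μ + k) with hA_def
  set B : ℝ := 2 * ((k : ℝ) + 1) with hB_def
  set C : ℝ := 2 * (2 * μ + ((k : ℝ) + 1)) with hC_def
  have hA0 : (0:ℝ) ≤ A := by positivity
  have hB0 : (0:ℝ) ≤ B := by positivity
  have hC0 : (0:ℝ) ≤ C := by positivity
  have hA' : ((Real.sqrt A : ℂ)) * (Real.sqrt A : ℂ) = (A : ℂ) := by
    exact_mod_cast congrArg (Complex.ofReal) (Real.mul_self_sqrt hA0)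
  have hB' : ((Real.sqrt B : ℂ)) * (Real.sqrt B : ℂ) = (B : ℂ) := by
    exact_mod_cast congrArg (Complex.ofReal) (Real.mul_self_sqrt hB0)
  have hC' : ((Real.sqrt C : ℂ)) * (Real.sqrt C : ℂ) = (C : ℂ) := by
    exact_mod_cast congrArg (Complex.ofReal) (Real.mul_self_sqrt hC0)
  have e1 : bp (Finsupp.single (2 * k) 1) =
      ((Real.sqrt A : ℝ) : ℂ) • Finsupp.single (2 * k + 1) 1 := hbp_even k
  have e2 : bm (Finsupp.single (2 * k + 1) 1) =
      ((Real.sqrt A : ℝ) : ℂ) • Finsupp.single (2 * k) 1 := hbm_odd k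
  have e3 : bp (Finsupp.single (2 * k + 1) 1) =
      ((Real.sqrt B : ℝ) : ℂ) • Finsupp.single (2 * k + 2) 1 := by
    have := hbp_odd k; push_cast at this ⊢; exact this
  have e4 : bm (Finsupp.single (2 * k + 2) 1) =
      ((Real.sqrt B : ℝ) : ℂ) • Finsupp.single (2 * k + 1) 1 := by
    have := hbm_even k
    rw [show 2 * (k + 1) = 2 * k + 2 by ring] at this
    push_cast at this ⊢; exact this
  have e5 : bp (Finsupp.single (2 * k + 2) 1) =
      ((Real.sqrt C : ℝ) : ℂ) • Finsupp.single (2 * k + 3) 1 := by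
    have := hbp_even (k + 1)
    rw [show 2 * (k + 1) = 2 * k + 2 by ring] at this
    rw [show 2 * k + 2 + 1 = 2 * k + 3 by ring] at this
    push_cast at this ⊢; exact this
  have e6 : bm (Finsupp.single (2 * k + 3) 1) =
      ((Real.sqrt C : ℝ) : ℂ) • Finsupp.single (2 * k + 2) 1 := by
    have := hbm_odd (k + 1)
    rw [show 2 * (k + 1) = 2 * k + 2 by ring] at this
    rw [show 2 * k + 2 + 1 = 2 * k + 3 by ring] at this
    push_cast at this ⊢; exact this
  -- bp ∘ bm on even vector
  have hpm : bp (bm (Finsupp.single (2 * k) 1)) =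
      (((2 : ℝ) * k : ℝ) : ℂ) • Finsupp.single (2 * k) 1 := by
    cases k with
    | zero => simp [hbm_zero]
    | succ n =>
      rw [hbm_even n, map_smul, hbp_odd n, smul_smul]
      rw [show 2 * (n+1) = 2 * n + 2 by ring]
      push_cast
      congr 1
      have h0 : (0:ℝ) ≤ 2 * ((n:ℝ) + 1) := by positivity
      have := congrArg (Complex.ofReal) (Real.mul_self_sqrt h0)
      push_cast at this
      linear_combination this
  have hmp : bm (bp (Finsupp.single (2 * k) 1)) = (A : ℂ) • Finsupp.single (2 * k) 1 := by
    rw [e1, map_smul, e2, smul_smul, hA']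
  -- h on even vector
  have hhe : h (Finsupp.single (2 * k) 1) =
      (((2 * μ + 2 * k : ℝ)) : ℂ) • Finsupp.single (2 * k) 1 := by
    rw [hh]
    simp only [LinearMap.smul_apply, LinearMap.add_apply, Module.End.mul_apply, hmp, hpm,
      smul_smul, ← add_smul]
    congr 1
    push_cast [hA_def]
    ring
  -- 4 f e on even vector
  have hfe : ((4:ℂ) • (f * e)) (Finsupp.single (2 * k) 1) =
      (-(A * B) : ℂ) • Finsupp.single (2 * k) 1 := by
    rw [hf, he]
    simp only [LinearMap.smul_apply, LinearMap.add_apply, Module.End.mul_apply,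
      LinearMap.neg_apply, map_smul, map_add, map_neg, e1, e2, e3, e4, smul_smul, smul_add,
      smul_neg, ← add_smul, ← neg_smul]
    congr 1
    linear_combination (-(Real.sqrt B : ℂ) * (Real.sqrt B : ℂ)) * hA' - (A:ℂ) * hB'
  -- h^2 + stuff on even: now assemble
  have heven : Ω (Finsupp.single (2 * k) 1) =
      ((μ * (1 - μ) : ℝ) : ℂ) • Finsupp.single (2 * k) 1 := by
    rw [hΩ]
    simp only [LinearMap.neg_apply, LinearMap.smul_apply, LinearMap.add_apply, pow_two,
      Module.End.mul_apply, hfe, hhe, map_smul, smul_smul, ← add_smul, ← neg_smul]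
    congr 1
    push_cast [hA_def, hB_def]
    ring
  -- ODD part
  have hpm' : bp (bm (Finsupp.single (2 * k + 1) 1)) = (A : ℂ) • Finsupp.single (2 * k + 1) 1 := by
    rw [e2, map_smul, e1, smul_smul, hA']
  have hmp' : bm (bp (Finsupp.single (2 * k + 1) 1)) = (B : ℂ) • Finsupp.single (2 * k + 1) 1 := by
    rw [e3, map_smul, e4, smul_smul, hB']
  have hho : h (Finsupp.single (2 * k + 1) 1) =
      (((2 * μ + 2 * k + 1 : ℝ)) : ℂ) • Finsupp.single (2 * k + 1) 1 := by
    rw [hh]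
    simp only [LinearMap.smul_apply, LinearMap.add_apply, Module.End.mul_apply, hmp', hpm',
      smul_smul, ← add_smul]
    congr 1
    push_cast [hA_def, hB_def]
    ring
  have hfe' : ((4:ℂ) • (f * e)) (Finsupp.single (2 * k + 1) 1) =
      (-(B * C) : ℂ) • Finsupp.single (2 * k + 1) 1 := by
    rw [hf, he]
    simp only [LinearMap.smul_apply, LinearMap.add_apply, Module.End.mul_apply,
      LinearMap.neg_apply, map_smul, map_add, map_neg, e3, e4, e5, e6, smul_smul, smul_add,
      smul_neg, ← add_smul, ← neg_smul]
    congr 1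
    linear_combination (-(Real.sqrt C : ℂ) * (Real.sqrt C : ℂ)) * hB' - (B:ℂ) * hC'
  have hodd : Ω (Finsupp.single (2 * k + 1) 1) =
      ((1 / 4 - μ ^ 2 : ℝ) : ℂ) • Finsupp.single (2 * k + 1) 1 := by
    rw [hΩ]
    simp only [LinearMap.neg_apply, LinearMap.smul_apply, LinearMap.add_apply, pow_two,
      Module.End.mul_apply, hfe', hho, map_smul, smul_smul, ← add_smul, ← neg_smul]
    congr 1
    push_cast [hB_def, hC_def]
    ring
  exact ⟨heven, hodd⟩
end

section
/- Let μ > 0 be a real number, let V be the complex vector space of finitely supported functions ℕ → ℂ with standard basis (e_k)_{k ∈ ℕ}, and define linear operators b⁺, b⁻ on V by b⁺e_{2k} = √(2(2μ+k))·e_{2k+1}, b⁻e_{2k} = √(2k)·e_{2k-1} (so b⁻e_0 = 0), b⁺e_{2k+1} = √(2(k+1))·e_{2k+2}, and b⁻e_{2k+1} = √(2(2μ+k))·e_{2k}, for all k ∈ ℕ. Then this representation is irreducible: every linear subspace U ⊆ V that is invariant under both b⁺ and b⁻ satisfies U = {0} or U = V. -/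
/-- for μ > 0, the osp(1|2) representation given by the
operators b⁺, b⁻ on finitely supported functions ℕ → ℂ is irreducible: every
subspace invariant under b⁺ and b⁻ is {0} or the whole space. -/
theorem representation_is_irreducible
    (μ : ℝ) (hμ : 0 < μ)
    (bp bm : Module.End ℂ (ℕ →₀ ℂ))
    (hbp_even : ∀ k : ℕ, bp (Finsupp.single (2 * k) 1) =
      ((Real.sqrt (2 * (2 * μ + k)) : ℝ) : ℂ) • Finsupp.single (2 * k + 1) 1)
    (hbm_zero : bm (Finsupp.single 0 1) = 0)
    (hbm_even : ∀ k : ℕ, bm (Finsupp.single (2 * (k + 1)) 1) =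
      ((Real.sqrt (2 * (k + 1)) : ℝ) : ℂ) • Finsupp.single (2 * k + 1) 1)
    (hbp_odd : ∀ k : ℕ, bp (Finsupp.single (2 * k + 1) 1) =
      ((Real.sqrt (2 * (k + 1)) : ℝ) : ℂ) • Finsupp.single (2 * k + 2) 1)
    (hbm_odd : ∀ k : ℕ, bm (Finsupp.single (2 * k + 1) 1) =
      ((Real.sqrt (2 * (2 * μ + k)) : ℝ) : ℂ) • Finsupp.single (2 * k) 1) :
    ∀ U : Submodule ℂ (ℕ →₀ ℂ),
      (∀ v ∈ U, bp v ∈ U) → (∀ v ∈ U, bm v ∈ U) → U = ⊥ ∨ U = ⊤ := by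
  intro U hUp hUm
  by_cases hbot : U = ⊥
  · exact Or.inl hbot
  right
  -- bm lowers with nonzero coefficient
  have hbm' : ∀ n : ℕ, ∃ c : ℂ, c ≠ 0 ∧
      bm (Finsupp.single (n + 1) 1) = c • Finsupp.single n 1 := by
    intro n
    rcases Nat.even_or_odd n with ⟨k, hk⟩ | ⟨k, hk⟩
    · obtain ⟨k, rfl⟩ : ∃ k', n = 2 * k' := ⟨k, by omega⟩
      refine ⟨_, ?_, hbm_odd k⟩
      have : (0:ℝ) < Real.sqrt (2 * (2 * μ + k)) := Real.sqrt_pos.2 (by positivity)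
      exact_mod_cast this.ne'
    · obtain ⟨k, rfl⟩ : ∃ k', n = 2 * k' + 1 := ⟨k, by omega⟩
      have h := hbm_even k
      rw [show 2 * (k + 1) = 2 * k + 1 + 1 by ring] at h
      refine ⟨_, ?_, h⟩
      have : (0:ℝ) < Real.sqrt (2 * (k + 1 : ℕ)) := Real.sqrt_pos.2 (by positivity)
      exact_mod_cast this.ne'
  -- bp raises with nonzero coefficient
  have hbp' : ∀ n : ℕ, ∃ c : ℂ, c ≠ 0 ∧
      bp (Finsupp.single n 1) = c • Finsupp.single (n + 1) 1 := by
    intro n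
    rcases Nat.even_or_odd n with ⟨k, hk⟩ | ⟨k, hk⟩
    · obtain ⟨k, rfl⟩ : ∃ k', n = 2 * k' := ⟨k, by omega⟩
      refine ⟨_, ?_, hbp_even k⟩
      have : (0:ℝ) < Real.sqrt (2 * (2 * μ + k)) := Real.sqrt_pos.2 (by positivity)
      exact_mod_cast this.ne'
    · obtain ⟨k, rfl⟩ : ∃ k', n = 2 * k' + 1 := ⟨k, by omega⟩
      refine ⟨_, ?_, hbp_odd k⟩
      have : (0:ℝ) < Real.sqrt (2 * (k + 1 : ℕ)) := Real.sqrt_pos.2 (by positivity)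
      exact_mod_cast this.ne'
  -- iterated lowering of e_n gives nonzero multiple of e_0
  have hIter : ∀ n : ℕ, ∃ c : ℂ, c ≠ 0 ∧
      (bm ^ n) (Finsupp.single n 1) = c • Finsupp.single 0 1 := by
    intro n
    induction n with
    | zero => exact ⟨1, one_ne_zero, by simp⟩
    | succ n ih =>
      obtain ⟨c, hc, hcv⟩ := ih
      obtain ⟨d, hd, hdv⟩ := hbm' n
      refine ⟨d * c, mul_ne_zero hd hc, ?_⟩
      rw [pow_succ, Module.End.mul_apply, hdv, map_smul, hcv, smul_smul]
  -- lowering more times kills e_m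
  have hZero : ∀ m n : ℕ, m < n → (bm ^ n) (Finsupp.single m 1) = 0 := by
    intro m n hmn
    obtain ⟨c, hc, hcv⟩ := hIter m
    have h1 : (bm ^ (m + 1)) (Finsupp.single m 1) = 0 := by
      rw [pow_succ', Module.End.mul_apply, hcv, map_smul, hbm_zero, smul_zero]
    have : n = (n - (m + 1)) + (m + 1) := by omega
    rw [this, pow_add, Module.End.mul_apply, h1, map_zero]
  -- iterates remain in U
  have hUm_pow : ∀ (n : ℕ), ∀ w ∈ U, (bm ^ n) w ∈ U := by
    intro n
    induction n with
    | zero => intro w hw; simpa using hw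
    | succ n ih =>
      intro w hw
      rw [pow_succ, Module.End.mul_apply]
      exact ih _ (hUm w hw)
  -- e_0 ∈ U
  have h0 : Finsupp.single 0 (1:ℂ) ∈ U := by
    obtain ⟨v, hvU, hv⟩ := Submodule.exists_mem_ne_zero_of_ne_bot hbot
    have hsupp : v.support.Nonempty := Finsupp.support_nonempty_iff.2 hv
    set N := v.support.max' hsupp with hN
    have hvN : v N ≠ 0 := Finsupp.mem_support_iff.1 (v.support.max'_mem hsupp)
    obtain ⟨c, hc, hcv⟩ := hIter N
    have hv_eq : v = ∑ n ∈ v.support, Finsupp.single n (v n) := by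
      conv_lhs => rw [← Finsupp.sum_single v]
      rfl
    have hsum : (bm ^ N) v = (v N * c) • Finsupp.single 0 1 := by
      conv_lhs => rw [hv_eq]
      rw [map_sum]
      rw [Finset.sum_eq_single N]
      · rw [show Finsupp.single N (v N) = (v N) • Finsupp.single N 1 by
          rw [Finsupp.smul_single' (v N) N 1, mul_one]]
        rw [map_smul, hcv, smul_smul]
      · intro n hn hne
        have hlt : n < N := lt_of_le_of_ne (v.support.le_max' n hn) hne
        rw [show Finsupp.single n (v n) = (v n) • Finsupp.single n 1 by
          rw [Finsupp.smul_single' (v n) n 1, mul_one]]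
        rw [map_smul, hZero n N hlt, smul_zero]
      · intro hN'
        exact absurd (v.support.max'_mem hsupp) hN'
    have hmem : (v N * c) • Finsupp.single 0 (1:ℂ) ∈ U := by
      rw [← hsum]; exact hUm_pow N v hvU
    have := U.smul_mem (v N * c)⁻¹ hmem
    rwa [smul_smul, inv_mul_cancel₀ (mul_ne_zero hvN hc), one_smul] at this
  -- all e_n ∈ U
  have hall : ∀ n : ℕ, Finsupp.single n (1:ℂ) ∈ U := by
    intro n
    induction n with
    | zero => exact h0
    | succ n ih =>
      obtain ⟨c, hc, hcv⟩ := hbp' n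
      have hmem : c • Finsupp.single (n + 1) (1:ℂ) ∈ U := by
        rw [← hcv]; exact hUp _ ih
      have := U.smul_mem c⁻¹ hmem
      rwa [smul_smul, inv_mul_cancel₀ hc, one_smul] at this
  -- conclude
  rw [Submodule.eq_top_iff']
  intro x
  have hx_eq : x = ∑ n ∈ x.support, Finsupp.single n (x n) := by
    conv_lhs => rw [← Finsupp.sum_single x]
    rfl
  rw [hx_eq]
  refine Submodule.sum_mem U fun n _ => ?_
  rw [show Finsupp.single n (x n) = (x n) • Finsupp.single n 1 by
    rw [Finsupp.smul_single' (x n) n 1, mul_one]]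
  exact U.smul_mem _ (hall n)
end

section
/- Let μ > 1/2 be a real number, let V be the complex vector space of finitely supported functions ℕ → ℂ with standard basis (f_j)_{j ∈ ℕ}, and define linear operators B⁺, B⁻ on V encoding the second representation class (with basis vectors indexed from -1, via f_j ↔ e_{j-1}): B⁻f_0 = 0, B⁺f_{2k} = √(2(2μ+k-1))·f_{2k+1} and B⁻f_{2k} = √(2k)·f_{2k-1} for k ≥ 0 (2k > 0 for B⁻), and B⁺f_{2k+1} = √(2(k+1))·f_{2k+2} and B⁻f_{2k+1} = √(2(2μ+k-1))·f_{2k} for k ≥ 0. Also define operators b⁺, b⁻ on V by the first representation class with parameter μ̄ = μ - 1/2: b⁺f_{2k} = √(2(2μ̄+k))·f_{2k+1}, b⁻f_{2k} = √(2k)·f_{2k-1}, b⁺f_{2k+1} = √(2(k+1))·f_{2k+2}, b⁻f_{2k+1} = √(2(2μ̄+k))·f_{2k}. Then B⁺ = b⁺ and B⁻ = b⁻ as linear operators on V; hence the two representation classes are equivalent, and there is only one class of irreducible ∗-representations of osp(1|2), parametrized by μ > 0. -/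
/-- for μ > 1/2, the second representation class (basis
indexed from -1, realized via f_j ↔ e_{j-1}) coincides with the first
representation class with parameter μ̄ = μ - 1/2; hence the two classes are
equivalent and there is only one class of irreducible ∗-representations of
osp(1|2), parametrized by μ > 0. -/
theorem second_class_equivalent_to_first
    (μ : ℝ) (hμ : 1 / 2 < μ)
    (Bp Bm bp bm : Module.End ℂ (ℕ →₀ ℂ))
    -- second representation class, shifted to ℕ via f_j ↔ e_{j-1}
    (hBm_zero : Bm (Finsupp.single 0 1) = 0)
    (hBp_even : ∀ k : ℕ, Bp (Finsupp.single (2 * k) 1) =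
      ((Real.sqrt (2 * (2 * μ + k - 1)) : ℝ) : ℂ) • Finsupp.single (2 * k + 1) 1)
    (hBm_even : ∀ k : ℕ, Bm (Finsupp.single (2 * (k + 1)) 1) =
      ((Real.sqrt (2 * (k + 1)) : ℝ) : ℂ) • Finsupp.single (2 * k + 1) 1)
    (hBp_odd : ∀ k : ℕ, Bp (Finsupp.single (2 * k + 1) 1) =
      ((Real.sqrt (2 * (k + 1)) : ℝ) : ℂ) • Finsupp.single (2 * k + 2) 1)
    (hBm_odd : ∀ k : ℕ, Bm (Finsupp.single (2 * k + 1) 1) =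
      ((Real.sqrt (2 * (2 * μ + k - 1)) : ℝ) : ℂ) • Finsupp.single (2 * k) 1)
    -- first representation class with parameter μ̄ = μ - 1/2
    (hbp_even : ∀ k : ℕ, bp (Finsupp.single (2 * k) 1) =
      ((Real.sqrt (2 * (2 * (μ - 1 / 2) + k)) : ℝ) : ℂ) • Finsupp.single (2 * k + 1) 1)
    (hbm_zero : bm (Finsupp.single 0 1) = 0)
    (hbm_even : ∀ k : ℕ, bm (Finsupp.single (2 * (k + 1)) 1) =
      ((Real.sqrt (2 * (k + 1)) : ℝ) : ℂ) • Finsupp.single (2 * k + 1) 1)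
    (hbp_odd : ∀ k : ℕ, bp (Finsupp.single (2 * k + 1) 1) =
      ((Real.sqrt (2 * (k + 1)) : ℝ) : ℂ) • Finsupp.single (2 * k + 2) 1)
    (hbm_odd : ∀ k : ℕ, bm (Finsupp.single (2 * k + 1) 1) =
      ((Real.sqrt (2 * (2 * (μ - 1 / 2) + k)) : ℝ) : ℂ) • Finsupp.single (2 * k) 1) :
    Bp = bp ∧ Bm = bm := by

  have key : ∀ k : ℕ, (2 * (2 * μ + k - 1) : ℝ) = 2 * (2 * (μ - 1 / 2) + k) := by
    intro k; ring
  have hsingle : ∀ (f g : Module.End ℂ (ℕ →₀ ℂ)),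
      (∀ a : ℕ, f (Finsupp.single a 1) = g (Finsupp.single a 1)) → f = g := by
    intro f g h
    apply Finsupp.lhom_ext
    intro a b
    have : (Finsupp.single a b : ℕ →₀ ℂ) = b • Finsupp.single a 1 := by
      simp [Finsupp.smul_single]
    rw [this, map_smul, map_smul, h a]
  constructor
  · apply hsingle
    intro a
    rcases Nat.even_or_odd a with ⟨k, hk⟩ | ⟨k, hk⟩
    · have hk' : a = 2 * k := by omega
      rw [hk', hBp_even k, hbp_even k, key k]
    · have hk' : a = 2 * k + 1 := by omega
      rw [hk', hBp_odd k, hbp_odd k]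
  · apply hsingle
    intro a
    rcases Nat.even_or_odd a with ⟨k, hk⟩ | ⟨k, hk⟩
    · rcases Nat.eq_zero_or_pos k with rfl | hkpos
      · have hk' : a = 0 := by omega
        rw [hk', hBm_zero, hbm_zero]
      · obtain ⟨j, rfl⟩ : ∃ j, k = j + 1 := ⟨k - 1, by omega⟩
        have hk' : a = 2 * (j + 1) := by omega
        rw [hk', hBm_even j, hbm_even j]
    · have hk' : a = 2 * k + 1 := by omega
      rw [hk', hBm_odd k, hbm_odd k, key k]
end
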